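/- For each i with 1 ≤ i ≤ N−2, the Noumi operators satisfy the braid relation T̃_i ∘ T̃_{i+1} ∘ T̃_i = T̃_{i+1} ∘ T̃_i ∘ T̃_{i+1} as operators on the ring L of Laurent polynomials. -/

import Mathlib

open scoped BigOperators
open Finset

noncomputable section

namespace RST

/-! ## Rhombic staircase tableaux -/

/-- The four Greek letters `α, β, γ, δ` used to fill tableaux. -/
inductive Greek : Type
  | A | B | G | D
  deriving DecidableEq

instance : Fintype Greek :=
  ⟨{Greek.A, Greek.B, Greek.G, Greek.D}, by intro x; cases x <;> simp⟩

/-- The number of `0`'s (i.e. `∗`'s) in a word. -/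
def nzeros (w : List ℤ) : ℕ := w.count 0

/-- `‖w‖ = length + number of zeros`. -/
def nn (w : List ℤ) : ℕ := w.length + nzeros w

/-- The tiles of the rhombic diagram `Γ(w)` (with its distinguished tiling) are indexed by
pairs `i ≤ j` such that not both `w_i = 0` and `w_j = 0`.  The tile `(i,j)` is a square if
`w_i ≠ 0 ≠ w_j`, a vertical rhombus if `w_i ≠ 0 = w_j`, and a horizontal rhombus if
`w_i = 0 ≠ w_j`.  Tile `(i,j)` lies in the west-strip (row) of the border tile `i` and in the
north-strip (column) of the border tile `j`; the border tile `j` itself is the tile `(j,j)`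
when `w_j ≠ 0`. -/
def IsTile (w : List ℤ) (i j : Fin w.length) : Prop :=
  i ≤ j ∧ ¬(w.get i = 0 ∧ w.get j = 0)

/-- `ColAbove w i' i` says that a tile `(i',j)` lies strictly above the tile `(i,j)` in the
north-strip of the column `j` (in the distinguished tiling, a north-strip consists of its
squares, ordered bottom-to-top by decreasing row index, followed by its horizontal rhombi,
ordered bottom-to-top by decreasing row index). -/
def ColAbove (w : List ℤ) (i' i : Fin w.length) : Prop :=
  (w.get i' = 0 ∧ w.get i ≠ 0) ∨
    (w.get i' = 0 ∧ w.get i = 0 ∧ i' < i) ∨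
    (w.get i' ≠ 0 ∧ w.get i ≠ 0 ∧ i' < i)

/-- A filling of the tiles of `Γ(w)` by Greek letters (`none` = empty tile). -/
abbrev Filling (w : List ℤ) : Type := Fin w.length → Fin w.length → Option Greek

/-- The defining conditions for a rhombic staircase tableau of type `w`. -/
def IsRST (w : List ℤ) (f : Filling w) : Prop :=
  (∀ i j, ¬ IsTile w i j → f i j = none) ∧
  (∀ j, w.get j = -1 → (f j j = some Greek.B ∨ f j j = some Greek.G)) ∧
  (∀ j, w.get j = 1 → (f j j = some Greek.A ∨ f j j = some Greek.D)) ∧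
  (∀ i j, w.get j = 0 → (f i j = none ∨ f i j = some Greek.B ∨ f i j = some Greek.D)) ∧
  (∀ i j, w.get i = 0 → (f i j = none ∨ f i j = some Greek.A ∨ f i j = some Greek.G)) ∧
  (∀ i j i', (f i j = some Greek.A ∨ f i j = some Greek.G) →
      IsTile w i' j → ColAbove w i' i → f i' j = none) ∧
  (∀ i j j', (f i j = some Greek.B ∨ f i j = some Greek.D) →
      j < j' → IsTile w i j' → f i j' = none)

/-- The nearest nonempty tile to the right of `(i,j)` in its west-strip contains `g`. -/
def SeesRight (w : List ℤ) (f : Filling w) (i j : Fin w.length) (g : Greek) : Prop :=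
  ∃ j' : Fin w.length, i ≤ j' ∧ j' < j ∧ f i j' = some g ∧
    ∀ j'' : Fin w.length, j' < j'' → j'' < j → f i j'' = none

/-- The nearest nonempty tile below `(i,j)` in its north-strip contains `g`. -/
def SeesBelow (w : List ℤ) (f : Filling w) (i j : Fin w.length) (g : Greek) : Prop :=
  ∃ i' : Fin w.length, IsTile w i' j ∧ ColAbove w i i' ∧ f i' j = some g ∧
    ∀ i'' : Fin w.length, IsTile w i'' j → ColAbove w i i'' → ColAbove w i'' i' → f i'' j = none

variable {R : Type*} [CommRing R]

open Classical in
/-- The weight of the tile `(i,j)` in the filling `f` (the Greek letter it contains, if any,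
times the appropriate power of `t`). -/
def tileWt (pa pb pg pd pt : R) (w : List ℤ) (f : Filling w) (i j : Fin w.length) : R :=
  if ¬ IsTile w i j then 1
  else
    match f i j with
    | some Greek.A => pa * (if w.get i = 0 then pt else 1)
    | some Greek.B => pb * (if w.get j = 0 then pt else 1)
    | some Greek.G => pg
    | some Greek.D => pd
    | none =>
      if w.get i ≠ 0 ∧ w.get j = 0 then
        -- empty vertical rhombus
        (if SeesRight w f i j Greek.B then pt ^ 2
         else if SeesRight w f i j Greek.A ∨ SeesRight w f i j Greek.G then pt else 1)
      else if w.get i = 0 ∧ w.get j ≠ 0 then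
        -- empty horizontal rhombus
        (if SeesBelow w f i j Greek.A then pt ^ 2
         else if SeesBelow w f i j Greek.B ∨ SeesBelow w f i j Greek.D then pt else 1)
      else
        -- empty square
        (if SeesRight w f i j Greek.B ∨
            ((SeesRight w f i j Greek.A ∨ SeesRight w f i j Greek.G) ∧
              (SeesBelow w f i j Greek.A ∨ SeesBelow w f i j Greek.D)) then pt else 1)

/-- The weight `wt(T)` of a filling: the product of the weights of all its tiles. -/
def wt (pa pb pg pd pt : R) (w : List ℤ) (f : Filling w) : R :=
  ∏ i : Fin w.length, ∏ j : Fin w.length, tileWt pa pb pg pd pt w f i j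

open Classical in
/-- `R(w)`: the generating polynomial of all rhombic staircase tableaux of type `w`. -/
def RR (pa pb pg pd pt : R) (w : List ℤ) : R :=
  ∑ f ∈ Finset.univ.filter (IsRST w), wt pa pb pg pd pt w f

/-- `λ_M = αβt^{M-1} - γδ`. -/
def lamM (pa pb pg pd pt : R) (M : ℕ) : R := pa * pb * pt ^ (M - 1) - pg * pd

variable {K : Type*} [Field K]

/-- The normalized generating function
`R̃(w) = (t-1)^{N-r} / ∏_{i=2r}^{N+r-1} (αβt^i - γδ) · R(w)`. -/
def Rt (pa pb pg pd pt : K) (w : List ℤ) : K :=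
  ((pt - 1) ^ (w.length - nzeros w) /
      ∏ i ∈ Finset.Ico (2 * nzeros w) (w.length + nzeros w), (pa * pb * pt ^ i - pg * pd)) *
    RR pa pb pg pd pt w

/-! ## The ring of Laurent polynomials in `z_1, …, z_N` -/

/-- The ring `L = K[z_1^{±1}, …, z_N^{±1}]` of Laurent polynomials in `N` variables. -/
abbrev Lp (K : Type*) [Field K] (N : ℕ) : Type _ := AddMonoidAlgebra K (Fin N → ℤ)

variable {N : ℕ}

/-- The constant `c` as a Laurent polynomial. -/
def CC (c : K) : Lp K N := AddMonoidAlgebra.single 0 c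

/-- The variable `z_j`. -/
def Z (j : Fin N) : Lp K N := AddMonoidAlgebra.single (Pi.single j 1) 1

/-- The inverse variable `z_j⁻¹`. -/
def Zinv (j : Fin N) : Lp K N := AddMonoidAlgebra.single (Pi.single j (-1)) 1

/-- The coefficient of the Laurent monomial `z^m` in `f`. -/
def coeff (f : Lp K N) (m : Fin N → ℤ) : K := f.coeff m

/-- `f` does not involve the variable `z_v`. -/
def IndepVar (f : Lp K N) (v : Fin N) : Prop :=
  ∀ m : Fin N → ℤ, coeff f m ≠ 0 → m v = 0

/-- `(z^m - s_{uv} z^m)/(z_u - z_v)` as a Laurent polynomial, where `s_{uv}` exchanges the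
variables `z_u, z_v`:  for `p = m u ≥ r = m v` this is `∑_{k=0}^{p-r-1} z_u^{r+k} z_v^{p-1-k}`
(times the other variables), and for `p < r` it is `-∑_{k=0}^{r-p-1} z_u^{p+k} z_v^{r-1-k}`. -/
def ddMono (u v : Fin N) (m : Fin N → ℤ) : Lp K N :=
  if m v ≤ m u then
    ∑ k ∈ Finset.range (m u - m v).toNat,
      AddMonoidAlgebra.single
        (Function.update (Function.update m u (m v + (k : ℤ))) v (m u - 1 - (k : ℤ))) (1 : K)
  else
    - ∑ k ∈ Finset.range (m v - m u).toNat,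
      AddMonoidAlgebra.single
        (Function.update (Function.update m u (m u + (k : ℤ))) v (m v - 1 - (k : ℤ))) (1 : K)

/-- The divided difference `f ↦ (f - s_{uv} f)/(z_u - z_v)`. -/
def ddPair (u v : Fin N) (f : Lp K N) : Lp K N :=
  Finsupp.sum f.coeff fun m c => CC c * ddMono u v m

/-- Noumi's operator `T̃ = t - (t z_u - z_v) (1 - s_{uv})/(z_u - z_v)` on Laurent polynomials;
for `u, v` the positions of `z_i, z_{i+1}` this is the operator `T̃_i`, `1 ≤ i ≤ N-1`. -/
def Tmid (t : K) (u v : Fin N) (f : Lp K N) : Lp K N :=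
  CC t * f - (CC t * Z u - Z v) * ddPair u v f

/-- `(z^m - s₀ z^m)/(z_v - q z_v⁻¹)` as a Laurent polynomial, where `s₀` maps `z_v ↦ q z_v⁻¹`:
for `p = m v ≥ 0` this is `∑_{k=0}^{p-1} q^k z_v^{p-1-2k}` (times the other variables), and for
`p < 0` it is `-∑_{k=0}^{-p-1} q^{p+k} z_v^{p+1+2k}`. -/
def dd0Mono (q : K) (v : Fin N) (m : Fin N → ℤ) : Lp K N :=
  if 0 ≤ m v then
    ∑ k ∈ Finset.range (m v).toNat,
      AddMonoidAlgebra.single (Function.update m v (m v - 1 - 2 * (k : ℤ))) (q ^ (k : ℕ))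
  else
    - ∑ k ∈ Finset.range (-(m v)).toNat,
      AddMonoidAlgebra.single (Function.update m v (m v + 1 + 2 * (k : ℤ))) (q ^ (m v + (k : ℤ)))

/-- The divided difference `f ↦ (f - s₀ f)/(z_v - q z_v⁻¹)`. -/
def dd0 (q : K) (v : Fin N) (f : Lp K N) : Lp K N :=
  Finsupp.sum f.coeff fun m c => CC c * dd0Mono q v m

/-- Noumi's operator `T̃₀ = -ac/q - (z₁-a)(z₁-c)/z₁ · (1-s₀)/(z₁ - q z₁⁻¹)`, acting on the
variable `z_v` (with `v` the position of `z₁`); here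
`-(z-a)(z-c)/z = -z + (a+c) - ac z⁻¹`. -/
def T0 (a c q : K) (v : Fin N) (f : Lp K N) : Lp K N :=
  CC (-(a * c) / q) * f + (CC (a + c) - Z v - CC (a * c) * Zinv v) * dd0 q v f

/-- Noumi's operator `T̃_N = -bd + (bz-1)(dz-1)/z · (1-s_N)/(z - z⁻¹)`, acting on the variable
`z_v` (with `v` the position of `z_N`); here `(bz-1)(dz-1)/z = bd z - (b+d) + z⁻¹`, and
`(1 - s_N)/(z - z⁻¹)` is `dd0` with `q = 1`. -/
def TN (b d : K) (v : Fin N) (f : Lp K N) : Lp K N :=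
  CC (-(b * d)) * f + (CC (b * d) * Z v - CC (b + d) + Zinv v) * dd0 1 v f

/-- The operator `T̃_j` for `0 ≤ j ≤ N` (`T̃₀`, `T̃_j` with `1 ≤ j ≤ N-1`, or `T̃_N`);
the identity for `j` out of range. -/
def TT (a b c d q t : K) (N : ℕ) (j : ℕ) : Lp K N → Lp K N :=
  if h0 : j = 0 then (if hN : 0 < N then T0 a c q ⟨0, hN⟩ else id)
  else if hj : j < N then Tmid t ⟨j - 1, by omega⟩ ⟨j, hj⟩
  else if j = N then (if hN : 0 < N then TN b d ⟨N - 1, by omega⟩ else id)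
  else id

/-- The Hecke parameter `t_j` (`t₀ = -ac/q`, `t_N = -bd`, `t_j = t` otherwise). -/
def tpar (a b c d q t : K) (N : ℕ) (j : ℕ) : K :=
  if j = 0 then -(a * c) / q else if j = N then -(b * d) else t

/-- The inverse operator `T̃_j⁻¹ = t_j⁻¹ (T̃_j + (1 - t_j))`. -/
def TTinv (a b c d q t : K) (N : ℕ) (j : ℕ) (f : Lp K N) : Lp K N :=
  CC (tpar a b c d q t N j)⁻¹ * (TT a b c d q t N j f + CC (1 - tpar a b c d q t N j) * f)

/-- Composition of a list of operators (leftmost applied last). -/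
def opProd (l : List (Lp K N → Lp K N)) : Lp K N → Lp K N := l.foldr (· ∘ ·) id

/-- The Cherednik operator
`Y_i = (T̃_i T̃_{i+1} ⋯ T̃_{N-1})(T̃_N T̃_{N-1} ⋯ T̃_1 T̃_0)(T̃₁⁻¹ T̃₂⁻¹ ⋯ T̃_{i-1}⁻¹)`. -/
def Yop (a b c d q t : K) (N : ℕ) (i : ℕ) : Lp K N → Lp K N :=
  opProd (((List.range' i (N - i)).map (TT a b c d q t N)) ++
    (((List.range (N + 1)).reverse).map (TT a b c d q t N)) ++
    ((List.range' 1 (i - 1)).map (TTinv a b c d q t N)))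

/-- Exchange of the variables `z_u` and `z_v`. -/
def swapVars (u v : Fin N) (f : Lp K N) : Lp K N :=
  Finsupp.sum f.coeff fun m c => AddMonoidAlgebra.single (m ∘ (Equiv.swap u v)) c

/-! ## The open boundary ASEP polynomials `F_μ` -/

/-- The word `μ|_{S̄}` obtained from `μ` by deleting the entries in positions of `S`. -/
def wordOf (N : ℕ) (mu : Fin N → ℤ) (S : Finset (Fin N)) : List ℤ :=
  ((List.finRange N).filter (fun k => decide (k ∉ S))).map mu

/-- The open boundary ASEP polynomial
`F_μ(z;t) = ∑_{S ⊆ V} R̃(μ|_{S̄}) ∏_{i ∈ S} (z_i^{μ_i} - 1)` where `V = {i : μ_i ≠ 0}`. -/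
def FF (pa pb pg pd pt : K) (N : ℕ) (mu : Fin N → ℤ) : Lp K N :=
  ∑ S ∈ (Finset.univ.filter fun k => mu k ≠ 0).powerset,
    CC (Rt pa pb pg pd pt (wordOf N mu S)) *
      ∏ i ∈ S, (AddMonoidAlgebra.single (Pi.single i (mu i)) (1 : K) - 1)

/-- `μ` is a signed permutation of `λ`. -/
def IsSignedPerm (lam mu : Fin N → ℤ) : Prop :=
  ∃ σ : Equiv.Perm (Fin N), ∀ i, mu i = lam (σ i) ∨ mu i = -lam (σ i)

/-- The word `δ = ((-1)^{N-r}, 0^r)`. -/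
def deltaWord (N r : ℕ) : Fin N → ℤ := fun k => if (k : ℕ) < N - r then -1 else 0

/-! ## Generic parameter fields -/

/-- The field `ℚ(a,b,c,d,q,t)` of rational functions in six parameters. -/
abbrev K6 : Type := FractionRing (MvPolynomial (Fin 6) ℚ)

/-- The generators of `K6`. -/
def gen6 (k : Fin 6) : K6 := algebraMap (MvPolynomial (Fin 6) ℚ) K6 (MvPolynomial.X k)

/-- The parameters `a, b, c, d, q, t` in `ℚ(a,b,c,d,q,t)`. -/
def pA : K6 := gen6 0
def pB : K6 := gen6 1
def pC : K6 := gen6 2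
def pD : K6 := gen6 3
def pQ : K6 := gen6 4
def pT : K6 := gen6 5

/-- The change of variables `α = -ac(1-t)/((a-1)(c-1))`. -/
def chA : K6 := -(pA * pC) * (1 - pT) / ((pA - 1) * (pC - 1))
/-- The change of variables `γ = (1-t)/((a-1)(c-1))`. -/
def chG : K6 := (1 - pT) / ((pA - 1) * (pC - 1))
/-- The change of variables `β = -bd(1-t)/((b-1)(d-1))`. -/
def chB : K6 := -(pB * pD) * (1 - pT) / ((pB - 1) * (pD - 1))
/-- The change of variables `δ = (1-t)/((b-1)(d-1))`. -/
def chD : K6 := (1 - pT) / ((pB - 1) * (pD - 1))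

/-- The field `ℚ(α,β,γ,δ,t)` of rational functions in five parameters. -/
abbrev K5 : Type := FractionRing (MvPolynomial (Fin 5) ℚ)

/-- The generators of `K5`. -/
def gen5 (k : Fin 5) : K5 := algebraMap (MvPolynomial (Fin 5) ℚ) K5 (MvPolynomial.X k)

/-- The parameters `α, β, γ, δ, t` in `ℚ(α,β,γ,δ,t)`. -/
def vA : K5 := gen5 0
def vB : K5 := gen5 1
def vG : K5 := gen5 2
def vD : K5 := gen5 3
def vT : K5 := gen5 4

/-- Words of length `N` with entries in `{-1,0,1}` having exactly `r` zeros, as a finite set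
of functions `Fin N → ℤ`. -/
def WordsF (N r : ℕ) : Finset (Fin N → ℤ) :=
  (Finset.univ.image fun g : Fin N → Fin 3 => fun k => ((g k : ℤ) - 1)).filter
    fun mu => (Finset.univ.filter fun k => mu k = 0).card = r

/-- `R(μ)` for a word given as a function `Fin N → ℤ`. -/
def RRw (pa pb pg pd pt : R) (N : ℕ) (mu : Fin N → ℤ) : R :=
  RR pa pb pg pd pt ((List.finRange N).map mu)

open Classical in
/-- The total weighted jump rate (without the normalization `1/(N+1)`) from state `μ` to
state `ν` in the two-species open boundary ASEP. -/
def jump (pa pb pg pd pt : K) (N : ℕ) (mu nu : Fin N → ℤ) : K :=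
  (∑ u : Fin N,
    if h : (u : ℕ) + 1 < N then
      ((if nu = mu ∘ Equiv.swap u ⟨(u : ℕ) + 1, h⟩ ∧
            ((mu u, mu ⟨(u : ℕ) + 1, h⟩) = (1, -1) ∨ (mu u, mu ⟨(u : ℕ) + 1, h⟩) = (1, 0) ∨
              (mu u, mu ⟨(u : ℕ) + 1, h⟩) = (0, -1)) then pt else 0) +
        (if nu = mu ∘ Equiv.swap u ⟨(u : ℕ) + 1, h⟩ ∧
            ((mu u, mu ⟨(u : ℕ) + 1, h⟩) = (-1, 1) ∨ (mu u, mu ⟨(u : ℕ) + 1, h⟩) = (0, 1) ∨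
              (mu u, mu ⟨(u : ℕ) + 1, h⟩) = (-1, 0)) then 1 else 0))
    else 0) +
  (if hN : 0 < N then
      ((if mu ⟨0, hN⟩ = -1 ∧ nu = Function.update mu ⟨0, hN⟩ 1 then pa else 0) +
        (if mu ⟨0, hN⟩ = 1 ∧ nu = Function.update mu ⟨0, hN⟩ (-1) then pg else 0) +
        (if mu ⟨N - 1, by omega⟩ = 1 ∧ nu = Function.update mu ⟨N - 1, by omega⟩ (-1) then pb
          else 0) +
        (if mu ⟨N - 1, by omega⟩ = -1 ∧ nu = Function.update mu ⟨N - 1, by omega⟩ 1 then pd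
          else 0))
    else 0)

open Classical in
/-- The one-step transition matrix of the two-species open boundary ASEP on the set of states
with exactly `r` zeros: off-diagonal entries are the jump rates divided by `N+1`, and the
diagonal entry is the complementary probability. -/
def Pmat (pa pb pg pd pt : K) (N r : ℕ) (mu nu : Fin N → ℤ) : K :=
  jump pa pb pg pd pt N mu nu / (N + 1) +
    (if nu = mu then 1 - (∑ x ∈ WordsF N r, jump pa pb pg pd pt N mu x) / (N + 1) else 0)

/-- A list as a word-function (entries beyond the length are `0`). -/
def funOf (N : ℕ) (w : List ℤ) : Fin N → ℤ := fun k => w.getD (k : ℕ) 0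

end RST


namespace RST

variable {N : ℕ} {K : Type*} [Field K]

lemma CC_mul_single (c : K) (e : Fin N → ℤ) (b : K) :
    CC c * AddMonoidAlgebra.single e b = AddMonoidAlgebra.single e (c * b) := by
  rw [CC, AddMonoidAlgebra.single_mul_single, zero_add]

lemma Z_mul_single (j : Fin N) (e : Fin N → ℤ) (b : K) :
    Z j * AddMonoidAlgebra.single e b = AddMonoidAlgebra.single (Pi.single j 1 + e) b := by
  rw [Z, AddMonoidAlgebra.single_mul_single, one_mul]

lemma upd2 (m : Fin N → ℤ) {u v : Fin N} (huv : u ≠ v) (p r : ℤ) :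
    Function.update (Function.update m u p) v r
      = fun x => if x = u then p else if x = v then r else m x := by
  funext x
  rcases eq_or_ne x v with rfl | hxv
  · simp [Function.update_apply, Ne.symm huv, huv]
  · rcases eq_or_ne x u with rfl | hxu
    · simp [Function.update_apply, hxv]
    · simp [Function.update_apply, hxv, hxu]

lemma addu (m : Fin N → ℤ) {u v : Fin N} (huv : u ≠ v) (p r : ℤ) :
    Pi.single u 1 + Function.update (Function.update m u p) v r
      = Function.update (Function.update m u (p+1)) v r := by
  funext x
  simp only [Pi.add_apply, upd2 m huv, Pi.single_apply]
  split_ifs <;> omega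

lemma addv (m : Fin N → ℤ) {u v : Fin N} (huv : u ≠ v) (p r : ℤ) :
    Pi.single v 1 + Function.update (Function.update m u p) v r
      = Function.update (Function.update m u p) v (r+1) := by
  funext x
  simp only [Pi.add_apply, upd2 m huv, Pi.single_apply]
  split_ifs <;> omega

lemma key_single {u v : Fin N} (huv : u ≠ v) (m : Fin N → ℤ) (c : K) :
    (Z u - Z v) * (CC c * ddMono u v m)
      = AddMonoidAlgebra.single m c - AddMonoidAlgebra.single (m ∘ Equiv.swap u v) c := by
  have hswap : (m ∘ Equiv.swap u v)
      = Function.update (Function.update m u (m v)) v (m u) := by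
    funext x
    rw [upd2 m huv]
    rcases eq_or_ne x u with rfl | hxu
    · simp [Equiv.swap_apply_def]
    · rcases eq_or_ne x v with rfl | hxv
      · simp [Equiv.swap_apply_def, hxu]
      · simp [Equiv.swap_apply_def, hxu, hxv]
  rcases le_or_gt (m v) (m u) with h | h
  · rw [ddMono, if_pos h]
    set n := (m u - m v).toNat with hndef
    have hn : (n : ℤ) = m u - m v := Int.toNat_of_nonneg (by omega)
    set g : ℕ → Lp K N := fun k => AddMonoidAlgebra.single
      (Function.update (Function.update m u (m v + (k:ℤ))) v (m u - (k:ℤ))) c with hg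
    have expand : CC c * (∑ k ∈ Finset.range n, AddMonoidAlgebra.single
        (Function.update (Function.update m u (m v + (k:ℤ))) v (m u - 1 - (k:ℤ))) (1:K))
        = ∑ k ∈ Finset.range n, AddMonoidAlgebra.single
        (Function.update (Function.update m u (m v + (k:ℤ))) v (m u - 1 - (k:ℤ))) c := by
      rw [Finset.mul_sum]
      exact Finset.sum_congr rfl fun k _ => by rw [CC_mul_single, mul_one]
    rw [expand, Finset.mul_sum]
    have step : ∀ k ∈ Finset.range n,
        (Z u - Z v) * AddMonoidAlgebra.single
          (Function.update (Function.update m u (m v + (k:ℤ))) v (m u - 1 - (k:ℤ))) c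
        = g (k+1) - g k := by
      intro k _
      rw [sub_mul, Z_mul_single, Z_mul_single, hg]
      congr 2
      · rw [addu m huv]
        congr 1 <;> push_cast <;> ring_nf
      · rw [addv m huv]
        congr 1; push_cast; ring_nf
    rw [Finset.sum_congr rfl step, Finset.sum_range_sub]
    have hgn : g n = AddMonoidAlgebra.single m c := by
      rw [hg]
      beta_reduce
      congr 1
      funext x
      simp only [upd2 m huv]
      split_ifs with h1 h2
      · subst h1; push_cast; omega
      · subst h2; push_cast; omega
      · rfl
    have hg0 : g 0 = AddMonoidAlgebra.single (m ∘ Equiv.swap u v) c := by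
      rw [hg, hswap]
      beta_reduce
      congr 1
      funext x
      simp only [upd2 m huv]
      split_ifs with h1 h2
      · subst h1; push_cast; omega
      · subst h2; push_cast; omega
      · rfl
    rw [hgn, hg0]
  · rw [ddMono, if_neg (not_le.mpr h)]
    set n := (m v - m u).toNat with hndef
    have hn : (n : ℤ) = m v - m u := Int.toNat_of_nonneg (by omega)
    set g : ℕ → Lp K N := fun k => AddMonoidAlgebra.single
      (Function.update (Function.update m u (m u + (k:ℤ))) v (m v - (k:ℤ))) c with hg
    have expand : CC c * (-∑ k ∈ Finset.range n, AddMonoidAlgebra.single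
        (Function.update (Function.update m u (m u + (k:ℤ))) v (m v - 1 - (k:ℤ))) (1:K))
        = -∑ k ∈ Finset.range n, AddMonoidAlgebra.single
        (Function.update (Function.update m u (m u + (k:ℤ))) v (m v - 1 - (k:ℤ))) c := by
      rw [mul_neg, Finset.mul_sum]
      congr 1
      exact Finset.sum_congr rfl fun k _ => by rw [CC_mul_single, mul_one]
    rw [expand, mul_neg, Finset.mul_sum]
    have step : ∀ k ∈ Finset.range n,
        (Z u - Z v) * AddMonoidAlgebra.single
          (Function.update (Function.update m u (m u + (k:ℤ))) v (m v - 1 - (k:ℤ))) c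
        = g (k+1) - g k := by
      intro k _
      rw [sub_mul, Z_mul_single, Z_mul_single, hg]
      congr 2
      · rw [addu m huv]
        congr 1 <;> push_cast <;> ring_nf
      · rw [addv m huv]
        congr 1; push_cast; ring_nf
    rw [Finset.sum_congr rfl step, Finset.sum_range_sub, neg_sub]
    have hg0 : g 0 = AddMonoidAlgebra.single m c := by
      rw [hg]
      beta_reduce
      congr 1
      funext x
      simp only [upd2 m huv]
      split_ifs with h1 h2
      · subst h1; push_cast; omega
      · subst h2; push_cast; omega
      · rfl
    have hgn : g n = AddMonoidAlgebra.single (m ∘ Equiv.swap u v) c := by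
      rw [hg, hswap]
      beta_reduce
      congr 1
      funext x
      simp only [upd2 m huv]
      split_ifs with h1 h2
      · subst h1; push_cast; omega
      · subst h2; push_cast; omega
      · rfl
    rw [hgn, hg0]

lemma ddPair_single (u v : Fin N) (m : Fin N → ℤ) (c : K) :
    ddPair u v (AddMonoidAlgebra.single m c) = CC c * ddMono u v m := by
  refine Finsupp.sum_single_index ?_
  simp [CC]

lemma ddPair_add (u v : Fin N) (f g : Lp K N) :
    ddPair u v (f + g) = ddPair u v f + ddPair u v g := by
  refine Finsupp.sum_add_index ?_ ?_
  · intro m _; simp [CC]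
  · intro m _ b₁ b₂
    rw [show CC (b₁ + b₂) = CC b₁ + CC b₂ from congrArg AddMonoidAlgebra.ofCoeff (Finsupp.single_add 0 b₁ b₂), add_mul]

def compHom (σ : Equiv.Perm (Fin N)) : (Fin N → ℤ) →+ (Fin N → ℤ) where
  toFun m := m ∘ σ
  map_zero' := rfl
  map_add' _ _ := rfl

def permHom (σ : Equiv.Perm (Fin N)) : Lp K N →+* Lp K N :=
  AddMonoidAlgebra.mapDomainRingHom K (compHom σ)

lemma permHom_single (σ : Equiv.Perm (Fin N)) (m : Fin N → ℤ) (c : K) :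
    permHom σ (AddMonoidAlgebra.single m c) = AddMonoidAlgebra.single (m ∘ σ) c := by
  simp [permHom, compHom, AddMonoidAlgebra.mapDomainRingHom]

lemma key {u v : Fin N} (huv : u ≠ v) (f : Lp K N) :
    (Z u - Z v) * ddPair u v f = f - permHom (Equiv.swap u v) f := by
  have h1 : ddPair u v f = ∑ m ∈ f.coeff.support, CC (f.coeff m) * ddMono u v m := rfl
  have h2 : permHom (Equiv.swap u v) f
      = ∑ m ∈ f.coeff.support, AddMonoidAlgebra.single (m ∘ Equiv.swap u v) (f.coeff m) := by
    show AddMonoidAlgebra.ofCoeff (Finsupp.mapDomain _ f.coeff) = _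
    rw [Finsupp.mapDomain, AddMonoidAlgebra.ofCoeff_finsuppSum]; rfl
  rw [h1, h2, Finset.mul_sum,
    Finset.sum_congr rfl (fun m _ => key_single huv m (f.coeff m)), Finset.sum_sub_distrib]
  congr 1
  exact AddMonoidAlgebra.sum_coeff_single f

lemma permHom_apply (σ : Equiv.Perm (Fin N)) (f : Lp K N) :
    permHom σ f = AddMonoidAlgebra.ofCoeff (Finsupp.mapDomain (fun m => m ∘ σ) f.coeff) := rfl

lemma permHom_comp (σ τ : Equiv.Perm (Fin N)) (f : Lp K N) :
    permHom σ (permHom τ f) = permHom (τ * σ) f := by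
  rw [permHom_apply, permHom_apply, permHom_apply, ← Finsupp.mapDomain_comp]
  rfl

lemma permHom_one (f : Lp K N) : permHom (1 : Equiv.Perm (Fin N)) f = f := by
  rw [permHom_apply,
    show (fun m : Fin N → ℤ => m ∘ ⇑(1 : Equiv.Perm (Fin N))) = id from rfl]
  rw [Finsupp.mapDomain_id]

lemma permHom_inj (σ : Equiv.Perm (Fin N)) :
    Function.Injective (permHom σ : Lp K N →+* Lp K N) := by
  intro a b h
  have h2 := congrArg (permHom σ⁻¹) h
  rw [permHom_comp, permHom_comp, show σ * σ⁻¹ = 1 from by group] at h2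
  rwa [permHom_one, permHom_one] at h2

lemma permHom_CC (σ : Equiv.Perm (Fin N)) (c : K) : permHom σ (CC c) = CC c := by
  rw [CC, permHom_single]; rfl

lemma permHom_Z (σ : Equiv.Perm (Fin N)) (j : Fin N) :
    permHom σ (Z j : Lp K N) = Z (σ⁻¹ j) := by
  rw [Z, permHom_single, Z]
  congr 1
  funext x
  simp only [Function.comp_apply, Pi.single_apply]
  by_cases hx : x = σ⁻¹ j
  · subst hx; simp
  · rw [if_neg (fun hc => hx (by simp [← hc])), if_neg hx]

lemma Z_ne (u v : Fin N) (huv : u ≠ v) : (Z u : Lp K N) ≠ Z v := by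
  intro h
  rcases AddMonoidAlgebra.single_inj.mp h with ⟨h2, -⟩ | ⟨h0, -⟩
  · have := congrFun h2 u
    simp [Pi.single_apply, huv] at this
  · exact one_ne_zero h0

instance instLpDomain : IsDomain (Lp K N) := NoZeroDivisors.to_isDomain _

def toF : Lp K N →+* FractionRing (Lp K N) := algebraMap _ _

lemma toF_inj : Function.Injective (toF : Lp K N →+* _) :=
  IsFractionRing.injective _ _

def permF (σ : Equiv.Perm (Fin N)) :
    FractionRing (Lp K N) →+* FractionRing (Lp K N) :=
  IsLocalization.lift (M := nonZeroDivisors (Lp K N))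
    (g := (algebraMap (Lp K N) (FractionRing (Lp K N))).comp (permHom σ))
    (by
      intro y
      refine isUnit_iff_ne_zero.mpr ?_
      simp only [RingHom.comp_apply]
      intro h0
      have h1 : permHom σ (y : Lp K N) = 0 := by
        apply IsFractionRing.injective (Lp K N) (FractionRing (Lp K N))
        rw [map_zero]; exact h0
      have h2 : (y : Lp K N) = 0 := permHom_inj σ (by rw [h1, map_zero])
      exact nonZeroDivisors.coe_ne_zero y h2)

lemma permF_toF (σ : Equiv.Perm (Fin N)) (f : Lp K N) :
    permF σ (toF f) = toF (permHom σ f) :=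
  IsLocalization.lift_eq _ f

lemma permF_comp (σ τ : Equiv.Perm (Fin N)) (x : FractionRing (Lp K N)) :
    permF σ (permF τ x) = permF (τ * σ) x := by
  have h : ((permF σ).comp (permF (K := K) (N := N) τ)) = permF (τ * σ) := by
    refine IsLocalization.ringHom_ext (nonZeroDivisors (Lp K N)) ?_
    refine RingHom.ext fun r => ?_
    simp only [RingHom.comp_apply]
    rw [show (algebraMap (Lp K N) (FractionRing (Lp K N))) r = toF r from rfl,
      permF_toF, permF_toF, permF_toF, permHom_comp]
  exact DFunLike.congr_fun h x

lemma permF_id (x : FractionRing (Lp K N)) : permF (K := K) 1 x = x := by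
  have h : (permF (K := K) (N := N) 1) = RingHom.id _ := by
    refine IsLocalization.ringHom_ext (nonZeroDivisors (Lp K N)) ?_
    refine RingHom.ext fun r => ?_
    simp only [RingHom.comp_apply, RingHom.id_apply]
    rw [show (algebraMap (Lp K N) (FractionRing (Lp K N))) r = toF r from rfl,
      permF_toF, permHom_one]
  rw [h]; rfl


private lemma frac_step {F : Type*} [Field F] (c1 n1 d1 c2 n2 d2 d : F)
    (h1 : d1 ≠ 0) (h2 : d2 ≠ 0) (hd : d ≠ 0) :
    (c1 * (n1 / d1) + c2 * (n2 / d2)) / d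
      = (c1 * n1 * d2 + c2 * n2 * d1) / (d1 * d2 * d) := by
  field_simp

private lemma frac_step3 {F : Type*} [Field F] (c1 n1 c2 n2 d e : F)
    (hd : d ≠ 0) (he : e ≠ 0) :
    (c1 * (n1 / d) + c2 * (n2 / d)) / e = (c1 * n1 + c2 * n2) / (d * e) := by
  field_simp

set_option maxHeartbeats 1000000 in
lemma TF_braid {F : Type*} [Field F] (t A B C : F) (σ1 σ2 : F →+* F)
    (h1A : σ1 A = B) (h1B : σ1 B = A) (h1C : σ1 C = C)
    (h2A : σ2 A = A) (h2B : σ2 B = C) (h2C : σ2 C = B)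
    (h1t : σ1 t = t) (h2t : σ2 t = t)
    (hAB : A - B ≠ 0) (hBC : B - C ≠ 0) (hAC : A - C ≠ 0)
    (x x1 x2 x12 x21 x3 : F)
    (hx1 : σ1 x = x1) (hx2 : σ2 x = x2) (hx12 : σ1 x2 = x12) (hx21 : σ2 x1 = x21)
    (h3a : σ1 x21 = x3) (h3b : σ2 x12 = x3)
    (hs1x1 : σ1 x1 = x) (hs1x12 : σ1 x12 = x2) (hs1x3 : σ1 x3 = x21)
    (hs2x2 : σ2 x2 = x) (hs2x21 : σ2 x21 = x1) (hs2x3 : σ2 x3 = x12)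
    (T1 : F → F) (hT1 : ∀ y, T1 y = t * y - (t * A - B) * ((y - σ1 y) / (A - B)))
    (T2 : F → F) (hT2 : ∀ y, T2 y = t * y - (t * B - C) * ((y - σ2 y) / (B - C))) :
    T1 (T2 (T1 x)) = T2 (T1 (T2 x)) := by
  have hBA : B - A ≠ 0 := fun h => hAB (by linear_combination -h)
  have hCB : C - B ≠ 0 := fun h => hBC (by linear_combination -h)
  have hCA : C - A ≠ 0 := fun h => hAC (by linear_combination -h)
  have hT1' : ∀ y, T1 y = (B * (1 - t) * y + (t * A - B) * σ1 y) / (A - B) := by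
    intro y; rw [hT1]; field_simp; ring
  have hT2' : ∀ y, T2 y = (C * (1 - t) * y + (t * B - C) * σ2 y) / (B - C) := by
    intro y; rw [hT2]; field_simp; ring
  -- LHS chain
  have e1 : T1 x = (B * (1 - t) * x + (t * A - B) * x1) / (A - B) := by
    rw [hT1', hx1]
  have es1 : σ2 (T1 x)
      = (C * (1 - t) * x2 + (t * A - C) * x21) / (A - C) := by
    rw [e1, map_div₀]
    simp only [map_add, map_sub, map_mul, map_one, h2A, h2B, h2C, h2t, hx2, hx21]
  have e2 : T2 (T1 x)
      = (C * (1 - t) * (B * (1 - t) * x + (t * A - B) * x1) * (A - C)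
          + (t * B - C) * (C * (1 - t) * x2 + (t * A - C) * x21) * (A - B))
        / ((A - B) * (A - C) * (B - C)) := by
    rw [hT2', es1, e1, frac_step _ _ _ _ _ _ _ hAB hAC hBC]
  have es2 : σ1 (T2 (T1 x))
      = (C * (1 - t) * (A * (1 - t) * x1 + (t * B - A) * x) * (B - C)
          + (t * A - C) * (C * (1 - t) * x12 + (t * B - C) * x3) * (B - A))
        / ((B - A) * (B - C) * (A - C)) := by
    rw [e2, map_div₀]
    simp only [map_add, map_sub, map_mul, map_one, h1A, h1B, h1C, h1t,
      hs1x1, hx12, h3a, hs1x12, hs1x3, hx1]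
  have es2' : σ1 (T2 (T1 x))
      = (-(C * (1 - t) * (A * (1 - t) * x1 + (t * B - A) * x) * (B - C)
          + (t * A - C) * (C * (1 - t) * x12 + (t * B - C) * x3) * (B - A)))
        / ((A - B) * (A - C) * (B - C)) := by
    rw [es2, div_eq_div_iff
      (mul_ne_zero (mul_ne_zero hBA hBC) hAC)
      (mul_ne_zero (mul_ne_zero hAB hAC) hBC)]
    ring
  have e3 : T1 (T2 (T1 x))
      = (B * (1 - t)
            * (C * (1 - t) * (B * (1 - t) * x + (t * A - B) * x1) * (A - C)
              + (t * B - C) * (C * (1 - t) * x2 + (t * A - C) * x21) * (A - B))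
          + (t * A - B)
            * (-(C * (1 - t) * (A * (1 - t) * x1 + (t * B - A) * x) * (B - C)
              + (t * A - C) * (C * (1 - t) * x12 + (t * B - C) * x3) * (B - A))))
        / ((A - B) * (A - C) * (B - C) * (A - B)) := by
    rw [hT1', es2', e2, frac_step3 _ _ _ _ _ _
      (mul_ne_zero (mul_ne_zero hAB hAC) hBC) hAB]
  -- RHS chain
  have f1 : T2 x = (C * (1 - t) * x + (t * B - C) * x2) / (B - C) := by
    rw [hT2', hx2]
  have fs1 : σ1 (T2 x)
      = (C * (1 - t) * x1 + (t * A - C) * x12) / (A - C) := by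
    rw [f1, map_div₀]
    simp only [map_add, map_sub, map_mul, map_one, h1A, h1B, h1C, h1t, hx1, hx12]
  have f2 : T1 (T2 x)
      = (B * (1 - t) * (C * (1 - t) * x + (t * B - C) * x2) * (A - C)
          + (t * A - B) * (C * (1 - t) * x1 + (t * A - C) * x12) * (B - C))
        / ((B - C) * (A - C) * (A - B)) := by
    rw [hT1', fs1, f1, frac_step _ _ _ _ _ _ _ hBC hAC hAB]
  have fs2 : σ2 (T1 (T2 x))
      = (C * (1 - t) * (B * (1 - t) * x2 + (t * C - B) * x) * (A - B)
          + (t * A - C) * (B * (1 - t) * x21 + (t * A - B) * x3) * (C - B))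
        / ((C - B) * (A - B) * (A - C)) := by
    rw [f2, map_div₀]
    simp only [map_add, map_sub, map_mul, map_one, h2A, h2B, h2C, h2t,
      hs2x2, hx21, h3b, hs2x21, hs2x3, hx2]
  have fs2' : σ2 (T1 (T2 x))
      = (-(C * (1 - t) * (B * (1 - t) * x2 + (t * C - B) * x) * (A - B)
          + (t * A - C) * (B * (1 - t) * x21 + (t * A - B) * x3) * (C - B)))
        / ((B - C) * (A - C) * (A - B)) := by
    rw [fs2, div_eq_div_iff
      (mul_ne_zero (mul_ne_zero hCB hAB) hAC)
      (mul_ne_zero (mul_ne_zero hBC hAC) hAB)]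
    ring
  have f3 : T2 (T1 (T2 x))
      = (C * (1 - t)
            * (B * (1 - t) * (C * (1 - t) * x + (t * B - C) * x2) * (A - C)
              + (t * A - B) * (C * (1 - t) * x1 + (t * A - C) * x12) * (B - C))
          + (t * B - C)
            * (-(C * (1 - t) * (B * (1 - t) * x2 + (t * C - B) * x) * (A - B)
              + (t * A - C) * (B * (1 - t) * x21 + (t * A - B) * x3) * (C - B))))
        / ((B - C) * (A - C) * (A - B) * (B - C)) := by
    rw [hT2', fs2', f2, frac_step3 _ _ _ _ _ _
      (mul_ne_zero (mul_ne_zero hBC hAC) hAB) hBC]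
  rw [e3, f3, div_eq_div_iff
    (mul_ne_zero (mul_ne_zero (mul_ne_zero hAB hAC) hBC) hAB)
    (mul_ne_zero (mul_ne_zero (mul_ne_zero hBC hAC) hAB) hBC)]
  ring

lemma swap_braid {u v w : Fin N} (huv : u ≠ v) (hvw : v ≠ w) (huw : u ≠ w) :
    Equiv.swap u v * Equiv.swap v w * Equiv.swap u v
      = Equiv.swap v w * Equiv.swap u v * Equiv.swap v w := by
  have e1 : Equiv.swap u v * Equiv.swap v w * (Equiv.swap u v)⁻¹ = Equiv.swap u w := by
    rw [← Equiv.swap_apply_apply]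
    rw [Equiv.swap_apply_right, Equiv.swap_apply_of_ne_of_ne (Ne.symm huw) (Ne.symm hvw)]
  have e2 : Equiv.swap v w * Equiv.swap u v * (Equiv.swap v w)⁻¹ = Equiv.swap u w := by
    rw [← Equiv.swap_apply_apply]
    rw [Equiv.swap_apply_of_ne_of_ne huv huw, Equiv.swap_apply_left]
  have := e1.trans e2.symm
  rw [Equiv.swap_inv, Equiv.swap_inv] at this
  calc Equiv.swap u v * Equiv.swap v w * Equiv.swap u v
      = Equiv.swap v w * Equiv.swap u v * Equiv.swap v w * (Equiv.swap v w * Equiv.swap v w) *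
          (Equiv.swap u v * Equiv.swap u v) := by
        rw [Equiv.swap_mul_self, Equiv.swap_mul_self, mul_one, mul_one, this]
    _ = Equiv.swap v w * Equiv.swap u v * Equiv.swap v w := by
        rw [Equiv.swap_mul_self, Equiv.swap_mul_self, mul_one, mul_one]

set_option maxHeartbeats 1000000 in
lemma Tmid_braid (t : K) {u v w : Fin N} (huv : u ≠ v) (hvw : v ≠ w) (huw : u ≠ w)
    (f : Lp K N) :
    Tmid t u v (Tmid t v w (Tmid t u v f)) = Tmid t v w (Tmid t u v (Tmid t v w f)) := by
  apply toF_inj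
  set s1 := Equiv.swap u v with hs1
  set s2 := Equiv.swap v w with hs2
  have hZne : ∀ (a b : Fin N), a ≠ b → toF (Z a : Lp K N) - toF (Z b) ≠ 0 := by
    intro a b hab h
    exact Z_ne a b hab (toF_inj (sub_eq_zero.mp h))
  have hddF : ∀ (a b : Fin N), a ≠ b → ∀ g : Lp K N,
      toF (ddPair a b g)
        = (toF g - permF (Equiv.swap a b) (toF g)) / (toF (Z a) - toF (Z b)) := by
    intro a b hab g
    rw [eq_div_iff (hZne a b hab), permF_toF, ← map_sub, mul_comm, ← map_sub, ← map_mul,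
      key hab]
  have hTF : ∀ (a b : Fin N), a ≠ b → ∀ g : Lp K N,
      toF (Tmid t a b g) = toF (CC t) * toF g
        - (toF (CC t) * toF (Z a) - toF (Z b))
          * ((toF g - permF (Equiv.swap a b) (toF g)) / (toF (Z a) - toF (Z b))) := by
    intro a b hab g
    rw [Tmid]
    simp only [map_sub, map_mul]
    rw [hddF a b hab g]
  set T1 : FractionRing (Lp K N) → FractionRing (Lp K N) := fun y =>
    toF (CC t) * y - (toF (CC t) * toF (Z u) - toF (Z v))
      * ((y - permF s1 y) / (toF (Z u) - toF (Z v))) with hT1def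
  set T2 : FractionRing (Lp K N) → FractionRing (Lp K N) := fun y =>
    toF (CC t) * y - (toF (CC t) * toF (Z v) - toF (Z w))
      * ((y - permF s2 y) / (toF (Z v) - toF (Z w))) with hT2def
  have hTm1 : ∀ g : Lp K N, toF (Tmid t u v g) = T1 (toF g) := fun g => hTF u v huv g
  have hTm2 : ∀ g : Lp K N, toF (Tmid t v w g) = T2 (toF g) := fun g => hTF v w hvw g
  rw [hTm1, hTm2, hTm1, hTm2, hTm1, hTm2]
  -- permHom images of generators
  have hswapZ : ∀ (a b j : Fin N), permF (Equiv.swap a b) (toF (Z j : Lp K N))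
      = toF (Z (Equiv.swap a b j)) := by
    intro a b j
    rw [permF_toF, permHom_Z, Equiv.swap_inv]
  have hCCfix : ∀ (σ : Equiv.Perm (Fin N)), permF σ (toF (CC t : Lp K N)) = toF (CC t) := by
    intro σ; rw [permF_toF, permHom_CC]
  have hb : s1 * s2 * s1 = s2 * s1 * s2 := swap_braid huv hvw huw
  have sq1 : s1 * s1 = 1 := Equiv.swap_mul_self u v
  have sq2 : s2 * s2 = 1 := Equiv.swap_mul_self v w
  refine TF_braid (toF (CC t)) (toF (Z u)) (toF (Z v)) (toF (Z w)) (permF s1) (permF s2)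
    ?_ ?_ ?_ ?_ ?_ ?_ ?_ ?_ (hZne u v huv) (hZne v w hvw) (hZne u w huw)
    (toF f) (permF s1 (toF f)) (permF s2 (toF f)) (permF s1 (permF s2 (toF f)))
    (permF s2 (permF s1 (toF f))) (permF s2 (permF s1 (permF s2 (toF f))))
    rfl rfl rfl rfl ?_ rfl ?_ ?_ ?_ ?_ ?_ ?_ T1 (fun y => rfl) T2 (fun y => rfl)
  · rw [hswapZ]; congr 1; congr 1; exact Equiv.swap_apply_left u v
  · rw [hswapZ]; congr 1; congr 1; exact Equiv.swap_apply_right u v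
  · rw [hswapZ]; congr 1; congr 1
    exact Equiv.swap_apply_of_ne_of_ne (Ne.symm huw) (Ne.symm hvw)
  · rw [hswapZ]; congr 1; congr 1
    exact Equiv.swap_apply_of_ne_of_ne huv huw
  · rw [hswapZ]; congr 1; congr 1; exact Equiv.swap_apply_left v w
  · rw [hswapZ]; congr 1; congr 1; exact Equiv.swap_apply_right v w
  · exact hCCfix s1
  · exact hCCfix s2
  · -- σ1 (σ2 (σ1 x)) = σ2 (σ1 (σ2 x))
    rw [permF_comp, permF_comp, permF_comp, permF_comp]
    simp only [← mul_assoc]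
    rw [hb]
  · -- σ1 (σ1 x) = x
    rw [permF_comp, sq1, permF_id]
  · -- σ1 (σ1 (σ2 x)) = σ2 x
    rw [permF_comp, permF_comp, show s2 * (s1 * s1) = s2 by rw [sq1, mul_one]]
  · -- σ1 (σ2 (σ1 (σ2 x))) = σ2 (σ1 x)
    rw [permF_comp, permF_comp, permF_comp, permF_comp,
      show s2 * (s1 * (s2 * s1)) = s1 * s2 by
        simp only [← mul_assoc]; rw [← hb, mul_assoc, sq1, mul_one]]
  · -- σ2 (σ2 x) = x
    rw [permF_comp, sq2, permF_id]
  · -- σ2 (σ2 (σ1 x)) = σ1 x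
    rw [permF_comp, permF_comp, show s1 * (s2 * s2) = s1 by rw [sq2, mul_one]]
  · -- σ2 (σ2 (σ1 (σ2 x))) = σ1 (σ2 x)
    rw [permF_comp, permF_comp, permF_comp, permF_comp,
      show s2 * (s1 * (s2 * s2)) = s2 * s1 by rw [sq2, mul_one]]

/-- For `1 ≤ i ≤ N-2`, the Noumi operators satisfy the braid relation
`T̃_i ∘ T̃_{i+1} ∘ T̃_i = T̃_{i+1} ∘ T̃_i ∘ T̃_{i+1}` on Laurent polynomials. -/
theorem statement3 (N : ℕ) (hN : 1 ≤ N) (i : ℕ) (h1 : 1 ≤ i) (h2 : i ≤ N - 2)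
    (f : Lp K6 N) :
    Tmid pT ⟨i - 1, by omega⟩ ⟨i, by omega⟩
        (Tmid pT ⟨i, by omega⟩ ⟨i + 1, by omega⟩
          (Tmid pT ⟨i - 1, by omega⟩ ⟨i, by omega⟩ f)) =
      Tmid pT ⟨i, by omega⟩ ⟨i + 1, by omega⟩
        (Tmid pT ⟨i - 1, by omega⟩ ⟨i, by omega⟩
          (Tmid pT ⟨i, by omega⟩ ⟨i + 1, by omega⟩ f)) := by
  exact Tmid_braid pT
    (by intro h; rw [Fin.mk.injEq] at h; omega)
    (by intro h; rw [Fin.mk.injEq] at h; omega)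
    (by intro h; rw [Fin.mk.injEq] at h; omega) f

end RST
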